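/- For any n-cube X of ℤ-indexed chain complexes of R-modules, the two composites tξ ∘ ξ and ξ_t ∘ ξ from tX to t³X are equal. Explicitly, both send an element x of the summand of tX indexed by T ⊆ {1,…,n} to the sum over all ordered triples (S₁, S₂, S₃) of pairwise disjoint subsets of {1,…,n} with S₁ ∪ S₂ ∪ S₃ = T of (−1)^{sgn(S₁,S₂) + sgn(S₁∪S₂, S₃)} x = (−1)^{sgn(S₂,S₃) + sgn(S₁, S₂∪S₃)} x placed in the summand indexed by (S₁, S₂, S₃). -/

import Mathlib

open scoped Classical

variable {R : Type} [CommRing R]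

section Defs

variable {M N : ℤ → Type} [∀ k, AddCommGroup (M k)] [∀ k, Module R (M k)]
  [∀ k, AddCommGroup (N k)] [∀ k, Module R (N k)]

/-- `d` is the differential of a chain complex: `d ∘ d = 0`. -/
def IsChainComplex (d : ∀ k, M k →ₗ[R] M (k - 1)) : Prop :=
  ∀ k, (d (k - 1)).comp (d k) = 0

/-- `φ` is a chain map from `(M, dM)` to `(N, dN)`. -/
def IsChainMap (dM : ∀ k, M k →ₗ[R] M (k - 1)) (dN : ∀ k, N k →ₗ[R] N (k - 1))
    (φ : ∀ k, M k →ₗ[R] N k) : Prop :=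
  ∀ k, (φ (k - 1)).comp (dM k) = (dN k).comp (φ k)

end Defs

/-- An `ι`-indexed cube of chain complexes of `R`-modules: the data of a chain complex
`ob S` for every `S ⊆ ι` and a degreewise map `ob S → ob T` for every inclusion `S ⊆ T`.
(The conditions that each `ob S` is a complex, each `map` is a chain map, and the
assignment is functorial are stated separately below.) -/
structure Cube (R : Type) [CommRing R] (ι : Type) [DecidableEq ι] where
  ob : Finset ι → ℤ → Type
  [acg : ∀ S k, AddCommGroup (ob S k)]
  [mod : ∀ S k, Module R (ob S k)]
  d : ∀ S k, ob S k →ₗ[R] ob S (k - 1)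
  map : ∀ S T, S ⊆ T → ∀ k, ob S k →ₗ[R] ob T k

attribute [instance] Cube.acg Cube.mod

namespace Cube

variable {ι : Type} [DecidableEq ι]

/-- Transport along equalities of the indexing subset and of the degree. -/
def cast (X : Cube R ι) {S T : Finset ι} {a b : ℤ} (h1 : S = T) (h2 : a = b) :
    X.ob S a →ₗ[R] X.ob T b where
  toFun x := h1 ▸ h2 ▸ x
  map_add' := by subst h1; subst h2; intros; rfl
  map_smul' := by subst h1; subst h2; intros; rfl

/-- Each `ob S` is a chain complex. -/
def IsComplex (X : Cube R ι) : Prop := ∀ S, IsChainComplex (R := R) (X.d S)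

/-- Each structure map is a chain map. -/
def MapsAreChain (X : Cube R ι) : Prop :=
  ∀ S T (h : S ⊆ T), IsChainMap (R := R) (X.d S) (X.d T) (fun k => X.map S T h k)

/-- The structure maps are functorial, i.e. `X` is a functor on the poset of subsets. -/
def IsFunctorial (X : Cube R ι) : Prop :=
  (∀ S k, X.map S S (subset_refl S) k = LinearMap.id) ∧
  (∀ S T U (hST : S ⊆ T) (hTU : T ⊆ U) k,
    (X.map T U hTU k).comp (X.map S T hST k) = X.map S U (hST.trans hTU) k)

end Cube

section T

variable {ι : Type} [DecidableEq ι] [LinearOrder ι]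

/-- `sgn(σᵢ^S) = |{s ∈ S : s > i}|`. -/
def sgnIns (i : ι) (S : Finset ι) : ℕ := (S.filter fun s => i < s).card

/-- The degree-`k` part of the explicit iterated-fiber complex `tX`:
the direct sum over `T ⊆ ι` of `X(T)_{k + |T|}`. -/
abbrev tOb (X : Cube R ι) (k : ℤ) : Type := ∀ T : Finset ι, X.ob T (k + T.card)

/-- The differential of `tX`: it sends an element `x` of the summand indexed by `T` to
`(-1)^{|T|} d(x)` plus the sum over `i ∉ T` of `(-1)^{sgn(σᵢ^T) + 1} X(T ⊆ T ∪ {i})(x)`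
placed in the summand indexed by `T ∪ {i}`. -/
noncomputable def tD (X : Cube R ι) (k : ℤ) : tOb X k →ₗ[R] tOb X (k - 1) :=
  LinearMap.pi fun T =>
    (((-1 : R) ^ T.card) •
      ((X.cast rfl (show k + (T.card : ℤ) - 1 = k - 1 + T.card by ring)).comp
        ((X.d T (k + T.card)).comp (LinearMap.proj T))))
    + ∑ i ∈ T.attach,
      (((-1 : R) ^ (sgnIns i.1 (T.erase i.1) + 1)) •
        ((X.cast rfl (show k + ((T.erase i.1).card : ℤ) = k - 1 + T.card by
            have h1 := Finset.card_erase_of_mem i.2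
            have h2 : 0 < T.card := Finset.card_pos.mpr ⟨i.1, i.2⟩
            omega)).comp
          ((X.map (T.erase i.1) T (Finset.erase_subset _ _) (k + (T.erase i.1).card)).comp
            (LinearMap.proj (T.erase i.1)))))


section Double

/-- The linear order on a disjoint union `α ⊕ β` in which everything in `α` precedes
everything in `β` (corresponding to the identification of `{1, …, 2n}` with two copies of
`{1, …, n}`). -/
instance sumLinearOrder {α β : Type} [LinearOrder α] [LinearOrder β] : LinearOrder (α ⊕ β) :=
  inferInstanceAs (LinearOrder (α ⊕ₗ β))

variable {ι : Type} [DecidableEq ι]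

/-- The `2n`-cube `C` associated to an `n`-cube `X`: identifying a subset `W ⊆ {1, …, 2n}`
with the pair `(W₁, W₂)` of subsets of `{1, …, n}`, it is given by `C(W) = X(W₁ ∪ W₂)`. -/
def Cube.dbl (X : Cube R ι) : Cube R (ι ⊕ ι) where
  ob W k := X.ob (W.toLeft ∪ W.toRight) k
  d W k := X.d _ k
  map W W' h k := X.map _ _
    (Finset.union_subset_union (Finset.toLeft_subset_toLeft h)
      (Finset.toRight_subset_toRight h)) k

variable [LinearOrder ι]

/-- `sgn(S, T) = |{(i, j) : i < j, i ∈ T, j ∈ S}|`, the sign statistic associated to the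
`2 × n` 0–1 matrix whose first row is the indicator of `S` and second row the indicator
of `T`. -/
def sgn2 (S T : Finset ι) : ℕ := ((T ×ˢ S).filter fun p => p.1 < p.2).card

/-- The map `ξ : tX → t²X`: it sends an element `x` of the summand indexed by `T` to the
sum, over all ordered pairs `(V₁, V₂)` of disjoint subsets with `V₁ ∪ V₂ = T`, of
`(-1)^{sgn(V₁, V₂)} x` placed in the summand of `t²X` indexed by `(V₁, V₂)`. -/
noncomputable def xiMap (X : Cube R ι) (k : ℤ) : tOb X k →ₗ[R] tOb X.dbl k :=
  LinearMap.pi fun W =>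
    if h : Disjoint W.toLeft W.toRight then
      ((-1 : R) ^ sgn2 W.toLeft W.toRight) •
        ((X.cast rfl (show k + (((W.toLeft ∪ W.toRight) : Finset ι).card : ℤ) = k + W.card by
            rw [Finset.card_union_of_disjoint h,
              ← Finset.card_toLeft_add_card_toRight (u := W)])).comp
          (LinearMap.proj (W.toLeft ∪ W.toRight)))
    else 0

end Double

section Pair

variable {ι : Type} [DecidableEq ι]

/-- The subset of `{1, …, 2n}` corresponding to a pair of subsets of `{1, …, n}` under the
identification of `{1, …, 2n}` with two copies of `{1, …, n}`. -/
def pairFS (U V : Finset ι) : Finset (ι ⊕ ι) :=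
  U.map Function.Embedding.inl ∪ V.map Function.Embedding.inr

theorem pairFS_toLeft (U V : Finset ι) : (pairFS U V).toLeft = U := by
  ext x
  simp [pairFS, Finset.mem_toLeft]

theorem pairFS_toRight (U V : Finset ι) : (pairFS U V).toRight = V := by
  ext x
  simp [pairFS, Finset.mem_toRight]

theorem pairFS_card (U V : Finset ι) : (pairFS U V).card = U.card + V.card := by
  rw [pairFS, Finset.card_union_of_disjoint, Finset.card_map, Finset.card_map]
  simp [Finset.disjoint_left]

variable [LinearOrder ι]

/-- The projection `γ_t : t²X → tX` onto the summands indexed by pairs of the form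
`(T, ∅)`, identified with the corresponding summands of `tX`. -/
noncomputable def gammaT (X : Cube R ι) (k : ℤ) : tOb X.dbl k →ₗ[R] tOb X k :=
  LinearMap.pi fun T =>
    (X.cast (show (pairFS T ∅).toLeft ∪ (pairFS T ∅).toRight = T by
        rw [pairFS_toLeft, pairFS_toRight, Finset.union_empty])
      (show k + ((pairFS T (∅ : Finset ι)).card : ℤ) = k + T.card by
        rw [pairFS_card]; simp)).comp
      (LinearMap.proj (pairFS T ∅))

/-- The projection `tγ : t²X → tX` onto the summands indexed by pairs of the form
`(∅, T)`, identified with the corresponding summands of `tX`. -/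
noncomputable def tGamma (X : Cube R ι) (k : ℤ) : tOb X.dbl k →ₗ[R] tOb X k :=
  LinearMap.pi fun T =>
    (X.cast (show (pairFS ∅ T).toLeft ∪ (pairFS ∅ T).toRight = T by
        rw [pairFS_toLeft, pairFS_toRight, Finset.empty_union])
      (show k + ((pairFS (∅ : Finset ι) T).card : ℤ) = k + T.card by
        rw [pairFS_card]; simp)).comp
      (LinearMap.proj (pairFS ∅ T))

end Pair

section Triple

variable {ι : Type} [DecidableEq ι]

/-- The `3n`-cube `C′` associated to an `n`-cube `X`: identifying a subset `V` of
`{1, …, 3n}` with the triple `(V₁, V₂, V₃)` of subsets of `{1, …, n}`, it is given by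
`C′(V) = X(V₁ ∪ V₂ ∪ V₃)`. -/
def Cube.trpl (X : Cube R ι) : Cube R (ι ⊕ (ι ⊕ ι)) where
  ob V k := X.ob (V.toLeft ∪ V.toRight.toLeft ∪ V.toRight.toRight) k
  d V k := X.d _ k
  map V V' h k := X.map _ _
    (Finset.union_subset_union
      (Finset.union_subset_union (Finset.toLeft_subset_toLeft h)
        (Finset.toLeft_subset_toLeft (Finset.toRight_subset_toRight h)))
      (Finset.toRight_subset_toRight (Finset.toRight_subset_toRight h))) k

variable [LinearOrder ι]

/-- `tξ : t²X → t³X` sends an element `x` of the summand indexed by `(U, T)` to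
`Σ_{(V₁, V₂) disjoint, V₁ ∪ V₂ = T} (-1)^{sgn(V₁, V₂)} x` placed in the summands
indexed by `(U, V₁, V₂)`. -/
noncomputable def tXi (X : Cube R ι) (k : ℤ) : tOb X.dbl k →ₗ[R] tOb X.trpl k :=
  LinearMap.pi fun V =>
    if h : Disjoint V.toRight.toLeft V.toRight.toRight then
      ((-1 : R) ^ sgn2 V.toRight.toLeft V.toRight.toRight) •
        ((X.cast
          (show (pairFS V.toLeft (V.toRight.toLeft ∪ V.toRight.toRight)).toLeft ∪
              (pairFS V.toLeft (V.toRight.toLeft ∪ V.toRight.toRight)).toRight =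
              V.toLeft ∪ V.toRight.toLeft ∪ V.toRight.toRight by
            rw [pairFS_toLeft, pairFS_toRight, Finset.union_assoc])
          (show k + ((pairFS V.toLeft (V.toRight.toLeft ∪ V.toRight.toRight)).card : ℤ) =
              k + V.card by
            rw [pairFS_card, Finset.card_union_of_disjoint h,
              ← Finset.card_toLeft_add_card_toRight (u := V),
              ← Finset.card_toLeft_add_card_toRight (u := V.toRight)])).comp
          (LinearMap.proj (pairFS V.toLeft (V.toRight.toLeft ∪ V.toRight.toRight))))
    else 0

/-- `ξ_t : t²X → t³X` sends an element `x` of the summand indexed by `(U, T)` to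
`Σ_{(U₁, U₂) disjoint, U₁ ∪ U₂ = U} (-1)^{sgn(U₁, U₂)} x` placed in the summands
indexed by `(U₁, U₂, T)`. -/
noncomputable def xiT (X : Cube R ι) (k : ℤ) : tOb X.dbl k →ₗ[R] tOb X.trpl k :=
  LinearMap.pi fun V =>
    if h : Disjoint V.toLeft V.toRight.toLeft then
      ((-1 : R) ^ sgn2 V.toLeft V.toRight.toLeft) •
        ((X.cast
          (show (pairFS (V.toLeft ∪ V.toRight.toLeft) V.toRight.toRight).toLeft ∪
              (pairFS (V.toLeft ∪ V.toRight.toLeft) V.toRight.toRight).toRight =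
              V.toLeft ∪ V.toRight.toLeft ∪ V.toRight.toRight by
            rw [pairFS_toLeft, pairFS_toRight])
          (show k + ((pairFS (V.toLeft ∪ V.toRight.toLeft) V.toRight.toRight).card : ℤ) =
              k + V.card by
            rw [pairFS_card, Finset.card_union_of_disjoint h,
              ← Finset.card_toLeft_add_card_toRight (u := V),
              ← Finset.card_toLeft_add_card_toRight (u := V.toRight)]
            push_cast
            ring)).comp
          (LinearMap.proj (pairFS (V.toLeft ∪ V.toRight.toLeft) V.toRight.toRight)))
    else 0

/-- The explicit map `tX → t³X` sending an element `x` of the summand indexed by `T` to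
the sum over all ordered triples `(S₁, S₂, S₃)` of pairwise disjoint subsets with
`S₁ ∪ S₂ ∪ S₃ = T` of `(-1)^e x` placed in the summand indexed by `(S₁, S₂, S₃)`, where
the exponent `e = e S₁ S₂ S₃` is a given function of the triple. -/
noncomputable def tripleXi (X : Cube R ι) (e : Finset ι → Finset ι → Finset ι → ℕ) (k : ℤ) :
    tOb X k →ₗ[R] tOb X.trpl k :=
  LinearMap.pi fun V =>
    if h : Disjoint V.toLeft V.toRight.toLeft ∧ Disjoint V.toLeft V.toRight.toRight ∧
        Disjoint V.toRight.toLeft V.toRight.toRight then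
      ((-1 : R) ^ e V.toLeft V.toRight.toLeft V.toRight.toRight) •
        ((X.cast rfl
          (show k + (((V.toLeft ∪ V.toRight.toLeft ∪ V.toRight.toRight) : Finset ι).card : ℤ) =
              k + V.card by
            rw [Finset.card_union_of_disjoint (Finset.disjoint_union_left.mpr ⟨h.2.1, h.2.2⟩),
              Finset.card_union_of_disjoint h.1,
              ← Finset.card_toLeft_add_card_toRight (u := V),
              ← Finset.card_toLeft_add_card_toRight (u := V.toRight)]
            push_cast
            ring)).comp
          (LinearMap.proj (V.toLeft ∪ V.toRight.toLeft ∪ V.toRight.toRight)))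
    else 0

end Triple

section Helpers

variable {ι : Type} [DecidableEq ι]

theorem Cube.cast_cast (X : Cube R ι) {S T U : Finset ι} {a b c : ℤ}
    (h1 : S = T) (h2 : a = b) (h3 : T = U) (h4 : b = c) (x : X.ob S a) :
    X.cast h3 h4 (X.cast h1 h2 x) = X.cast (h1.trans h3) (h2.trans h4) x := by
  subst h1; subst h2; subst h3; subst h4; rfl

variable [LinearOrder ι]

theorem tOb_congr {X : Cube R ι} {k : ℤ} (x : tOb X k) {S T : Finset ι} (h : S = T) :
    x T = X.cast h (by rw [h]) (x S) := by subst h; rfl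

theorem sgn2_union_right (S T T' : Finset ι) (h : Disjoint T T') :
    sgn2 S (T ∪ T') = sgn2 S T + sgn2 S T' := by
  unfold sgn2
  rw [Finset.union_product, Finset.filter_union, Finset.card_union_of_disjoint]
  refine Finset.disjoint_left.mpr ?_
  intro p hp hp'
  simp only [Finset.mem_filter, Finset.mem_product] at hp hp'
  exact (Finset.disjoint_left.mp h) hp.1.1 hp'.1.1

theorem sgn2_union_left (S S' T : Finset ι) (h : Disjoint S S') :
    sgn2 (S ∪ S') T = sgn2 S T + sgn2 S' T := by
  unfold sgn2
  rw [Finset.product_union, Finset.filter_union, Finset.card_union_of_disjoint]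
  refine Finset.disjoint_left.mpr ?_
  intro p hp hp'
  simp only [Finset.mem_filter, Finset.mem_product] at hp hp'
  exact (Finset.disjoint_left.mp h) hp.1.2 hp'.1.2

end Helpers

set_option maxHeartbeats 3000000 in
/-- for any `n`-cube `X` of chain complexes of `R`-modules, the two composites
`tξ ∘ ξ` and `ξ_t ∘ ξ : tX → t³X` are equal; explicitly, both send an element `x` of the
summand indexed by `T` to the sum over all ordered triples `(S₁, S₂, S₃)` of pairwise
disjoint subsets with `S₁ ∪ S₂ ∪ S₃ = T` of
`(-1)^{sgn(S₁,S₂) + sgn(S₁∪S₂,S₃)} x = (-1)^{sgn(S₂,S₃) + sgn(S₁,S₂∪S₃)} x` placed in the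
summand indexed by `(S₁, S₂, S₃)`. -/
theorem stmt_12 (n : ℕ) (X : Cube R (Fin n)) (h1 : X.IsComplex) (h2 : X.MapsAreChain)
    (h3 : X.IsFunctorial) :
    ∀ k,
      (tXi X k).comp (xiMap X k) =
        tripleXi X (fun S₁ S₂ S₃ => sgn2 S₁ S₂ + sgn2 (S₁ ∪ S₂) S₃) k ∧
      (xiT X k).comp (xiMap X k) =
        tripleXi X (fun S₁ S₂ S₃ => sgn2 S₁ S₂ + sgn2 (S₁ ∪ S₂) S₃) k ∧
      tripleXi X (fun S₁ S₂ S₃ => sgn2 S₁ S₂ + sgn2 (S₁ ∪ S₂) S₃) k =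
        tripleXi X (fun S₁ S₂ S₃ => sgn2 S₂ S₃ + sgn2 S₁ (S₂ ∪ S₃)) k := by
  intro k
  refine ⟨?_, ?_, ?_⟩
  · apply LinearMap.ext
    intro x
    funext V
    simp only [LinearMap.comp_apply, tXi, tripleXi, LinearMap.pi_apply]
    by_cases h23 : Disjoint V.toRight.toLeft V.toRight.toRight
    · rw [dif_pos h23]
      by_cases hd : Disjoint (pairFS V.toLeft (V.toRight.toLeft ∪ V.toRight.toRight)).toLeft
          (pairFS V.toLeft (V.toRight.toLeft ∪ V.toRight.toRight)).toRight
      · have hd' : Disjoint V.toLeft (V.toRight.toLeft ∪ V.toRight.toRight) := by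
          rwa [pairFS_toLeft, pairFS_toRight] at hd
        obtain ⟨hd12, hd13⟩ := Finset.disjoint_union_right.mp hd'
        rw [dif_pos ⟨hd12, hd13, h23⟩]
        erw [LinearMap.smul_apply, LinearMap.smul_apply, LinearMap.comp_apply,
          LinearMap.comp_apply, LinearMap.proj_apply, LinearMap.proj_apply]
        simp only [xiMap]
        erw [LinearMap.pi_apply]
        rw [dif_pos hd]
        erw [LinearMap.smul_apply, LinearMap.comp_apply, LinearMap.proj_apply]
        rw [tOb_congr x (show V.toLeft ∪ V.toRight.toLeft ∪ V.toRight.toRight =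
            (pairFS V.toLeft (V.toRight.toLeft ∪ V.toRight.toRight)).toLeft ∪
            (pairFS V.toLeft (V.toRight.toLeft ∪ V.toRight.toRight)).toRight by
          rw [pairFS_toLeft, pairFS_toRight, Finset.union_assoc])]
        erw [Cube.cast_cast, map_smul, Cube.cast_cast]
        rw [smul_smul, ← pow_add]
        congr 1
        congr 1
        rw [pairFS_toLeft, pairFS_toRight,
          sgn2_union_right V.toLeft V.toRight.toLeft V.toRight.toRight h23,
          sgn2_union_left V.toLeft V.toRight.toLeft V.toRight.toRight hd12]
        omega
      · have hd' : ¬ Disjoint V.toLeft (V.toRight.toLeft ∪ V.toRight.toRight) := by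
          rwa [pairFS_toLeft, pairFS_toRight] at hd
        rw [dif_neg (show ¬ _ by
          rintro ⟨h12', h13', -⟩
          exact hd' (Finset.disjoint_union_right.mpr ⟨h12', h13'⟩))]
        erw [LinearMap.smul_apply, LinearMap.comp_apply, LinearMap.proj_apply]
        simp only [xiMap]
        erw [LinearMap.pi_apply]
        rw [dif_neg hd]
        erw [LinearMap.zero_apply, map_zero, smul_zero, LinearMap.zero_apply]
        rfl
    · rw [dif_neg h23, dif_neg (fun h => h23 h.2.2)]
      rfl
  · apply LinearMap.ext
    intro x
    funext V
    simp only [LinearMap.comp_apply, xiT, tripleXi, LinearMap.pi_apply]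
    by_cases h12 : Disjoint V.toLeft V.toRight.toLeft
    · rw [dif_pos h12]
      by_cases hd : Disjoint (pairFS (V.toLeft ∪ V.toRight.toLeft) V.toRight.toRight).toLeft
          (pairFS (V.toLeft ∪ V.toRight.toLeft) V.toRight.toRight).toRight
      · have hd' : Disjoint (V.toLeft ∪ V.toRight.toLeft) V.toRight.toRight := by
          rwa [pairFS_toLeft, pairFS_toRight] at hd
        obtain ⟨hd13, hd23⟩ := Finset.disjoint_union_left.mp hd'
        rw [dif_pos ⟨h12, hd13, hd23⟩]
        erw [LinearMap.smul_apply, LinearMap.smul_apply, LinearMap.comp_apply,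
          LinearMap.comp_apply, LinearMap.proj_apply, LinearMap.proj_apply]
        simp only [xiMap]
        erw [LinearMap.pi_apply]
        rw [dif_pos hd]
        erw [LinearMap.smul_apply, LinearMap.comp_apply, LinearMap.proj_apply]
        rw [tOb_congr x (show V.toLeft ∪ V.toRight.toLeft ∪ V.toRight.toRight =
            (pairFS (V.toLeft ∪ V.toRight.toLeft) V.toRight.toRight).toLeft ∪
            (pairFS (V.toLeft ∪ V.toRight.toLeft) V.toRight.toRight).toRight by
          rw [pairFS_toLeft, pairFS_toRight])]
        erw [Cube.cast_cast, map_smul, Cube.cast_cast]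
        rw [smul_smul, ← pow_add]
        congr 1
        congr 1
        rw [pairFS_toLeft, pairFS_toRight]
      · have hd' : ¬ Disjoint (V.toLeft ∪ V.toRight.toLeft) V.toRight.toRight := by
          rwa [pairFS_toLeft, pairFS_toRight] at hd
        rw [dif_neg (show ¬ _ by
          rintro ⟨-, h13', h23'⟩
          exact hd' (Finset.disjoint_union_left.mpr ⟨h13', h23'⟩))]
        erw [LinearMap.smul_apply, LinearMap.comp_apply, LinearMap.proj_apply]
        simp only [xiMap]
        erw [LinearMap.pi_apply]
        rw [dif_neg hd]
        erw [LinearMap.zero_apply, map_zero, smul_zero, LinearMap.zero_apply]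
        rfl
    · rw [dif_neg h12, dif_neg (fun h => h12 h.1)]
      rfl
  · unfold tripleXi
    congr 1
    funext V
    by_cases hc : Disjoint V.toLeft V.toRight.toLeft ∧ Disjoint V.toLeft V.toRight.toRight ∧
        Disjoint V.toRight.toLeft V.toRight.toRight
    · rw [dif_pos hc, dif_pos hc]
      congr 1
      congr 1
      simp only [sgn2_union_left V.toLeft V.toRight.toLeft V.toRight.toRight hc.1,
        sgn2_union_right V.toLeft V.toRight.toLeft V.toRight.toRight hc.2.2]
      omega
    · rw [dif_neg hc, dif_neg hc]
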